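/- Let B be a bicategory and W a class of 1-morphisms satisfying conditions [WB1]–[WB5]. Given 1-morphisms f, g, h : B → C and w : C → D with w ∈ W, and 2-cells α₁ : w ∘ f ⇒ w ∘ g and α₂ : w ∘ g ⇒ w ∘ h, there exists a 1-morphism u : A → B in W together with 2-cells β₁ : f ∘ u ⇒ g ∘ u and β₂ : g ∘ u ⇒ h ∘ u such that w ∘ β₁ = α₁ ∘ u and w ∘ β₂ = α₂ ∘ u; consequently w ∘ (β₂ · β₁) = (α₂ · α₁) ∘ u. -/

import Mathlib

open CategoryTheory Bicategory

universe w v u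

/-- A class of 1-morphisms in a bicategory. -/
def WClass (B : Type u) [Bicategory.{w, v} B] :=
  ∀ ⦃a b : B⦄, (a ⟶ b) → Prop

namespace WClass

variable {B : Type u} [Bicategory.{w, v} B]

/-- [WB1]: all identities are in `W`. -/
def WB1 (W : WClass B) : Prop := ∀ a : B, W (𝟙 a)

/-- [WB2]: for composable arrows of `W` there is a pre-composition landing in `W`. -/
def WB2 (W : WClass B) : Prop :=
  ∀ ⦃a b c : B⦄ (vm : a ⟶ b) (wm : b ⟶ c), W vm → W wm →
    ∃ (a' : B) (u : a' ⟶ a), W (u ≫ vm ≫ wm)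

/-- [WB3]: squares with invertible fillers over cospans with one leg in `W`. -/
def WB3 (W : WClass B) : Prop :=
  ∀ ⦃a b c : B⦄ (wm : a ⟶ b) (f : c ⟶ b), W wm →
    ∃ (d : B) (h : d ⟶ a) (vm : d ⟶ c), W vm ∧ Nonempty (h ≫ wm ≅ vm ≫ f)

/-- `β` is a lifting of the 2-cell `η : f ≫ wm ⟶ g ≫ wm` along `wm`, via `u`. -/
def IsLift ⦃a b c : B⦄ (f g : a ⟶ b) (wm : b ⟶ c) (η : f ≫ wm ⟶ g ≫ wm)
    ⦃a' : B⦄ (u : a' ⟶ a) (β : u ≫ f ⟶ u ≫ g) : Prop :=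
  β ▷ wm = (α_ u f wm).hom ≫ u ◁ η ≫ (α_ u g wm).inv

/-- [WB4]: existence of liftings of 2-cells along arrows of `W`, together with
the compatibility of any two such liftings. -/
def WB4 (W : WClass B) : Prop :=
  (∀ ⦃a b c : B⦄ (f g : a ⟶ b) (wm : b ⟶ c), W wm → ∀ η : f ≫ wm ⟶ g ≫ wm,
    ∃ (a' : B) (u : a' ⟶ a), W u ∧ ∃ β : u ≫ f ⟶ u ≫ g, IsLift f g wm η u β) ∧
  (∀ ⦃a b c : B⦄ (f g : a ⟶ b) (wm : b ⟶ c), W wm → ∀ η : f ≫ wm ⟶ g ≫ wm,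
    ∀ ⦃a₁ : B⦄ (u₁ : a₁ ⟶ a) (β₁ : u₁ ≫ f ⟶ u₁ ≫ g), W u₁ → IsLift f g wm η u₁ β₁ →
      ∀ ⦃a₂ : B⦄ (u₂ : a₂ ⟶ a) (β₂ : u₂ ≫ f ⟶ u₂ ≫ g), W u₂ → IsLift f g wm η u₂ β₂ →
        ∃ (d : B) (s : d ⟶ a₁) (t : d ⟶ a₂), W (s ≫ u₁) ∧ W (t ≫ u₂) ∧
          ∃ ε₀ : s ≫ u₁ ≅ t ≫ u₂,
            ((α_ s u₁ f).hom ≫ s ◁ β₁ ≫ (α_ s u₁ g).inv) ≫ ε₀.hom ▷ g =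
              ε₀.hom ▷ f ≫ (α_ t u₂ f).hom ≫ t ◁ β₂ ≫ (α_ t u₂ g).inv)

/-- [WB5]: `W` is closed under invertible 2-cells. -/
def WB5 (W : WClass B) : Prop :=
  ∀ ⦃a b : B⦄ (vm wm : a ⟶ b), W wm → Nonempty (vm ≅ wm) → W vm

end WClass


namespace WClass

variable {B : Type u} [Bicategory.{w, v} B]

lemma isLift_comp ⦃a b c : B⦄ (f g h : a ⟶ b) (wm : b ⟶ c)
    (η₁ : f ≫ wm ⟶ g ≫ wm) (η₂ : g ≫ wm ⟶ h ≫ wm)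
    ⦃a' : B⦄ (u : a' ⟶ a) (β₁ : u ≫ f ⟶ u ≫ g) (β₂ : u ≫ g ⟶ u ≫ h)
    (l1 : IsLift f g wm η₁ u β₁) (l2 : IsLift g h wm η₂ u β₂) :
    IsLift f h wm (η₁ ≫ η₂) u (β₁ ≫ β₂) := by
  simp [IsLift] at *
  simp [l1, l2]

lemma isLift_whisker ⦃a b c : B⦄ (f g : a ⟶ b) (wm : b ⟶ c) (η : f ≫ wm ⟶ g ≫ wm)
    ⦃a' : B⦄ (u : a' ⟶ a) (β : u ≫ f ⟶ u ≫ g) (l : IsLift f g wm η u β)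
    ⦃a'' : B⦄ (t : a'' ⟶ a') :
    IsLift f g wm η (t ≫ u) ((α_ t u f).hom ≫ t ◁ β ≫ (α_ t u g).inv) := by
  simp [IsLift] at *
  simp [l]

lemma isLift_transport ⦃a b c : B⦄ (f g : a ⟶ b) (wm : b ⟶ c) (η : f ≫ wm ⟶ g ≫ wm)
    ⦃a' : B⦄ (u u' : a' ⟶ a) (ε₀ : u' ≅ u) (β : u ≫ f ⟶ u ≫ g)
    (l : IsLift f g wm η u β) :
    IsLift f g wm η u' (ε₀.hom ▷ f ≫ β ≫ ε₀.inv ▷ g) := by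
  simp only [IsLift] at *
  simp only [comp_whiskerRight, l, Category.assoc]
  rw [associator_naturality_left_assoc, ← whisker_exchange_assoc,
    associator_inv_naturality_left_assoc]
  simp [← comp_whiskerRight]

end WClass

theorem statement0 {B : Type u} [Bicategory.{w, v} B] (W : WClass B)
    (h1 : W.WB1) (h2 : W.WB2) (h3 : W.WB3) (h4 : W.WB4) (h5 : W.WB5)
    {b c d : B} (f g h : b ⟶ c) (wm : c ⟶ d) (hw : W wm)
    (η₁ : f ≫ wm ⟶ g ≫ wm) (η₂ : g ≫ wm ⟶ h ≫ wm) :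
    ∃ (a : B) (u : a ⟶ b), W u ∧
      ∃ (β₁ : u ≫ f ⟶ u ≫ g) (β₂ : u ≫ g ⟶ u ≫ h),
        WClass.IsLift f g wm η₁ u β₁ ∧ WClass.IsLift g h wm η₂ u β₂ ∧
          WClass.IsLift f h wm (η₁ ≫ η₂) u (β₁ ≫ β₂) := by

  obtain ⟨a₁, u₁, hu₁, β₁, l₁⟩ := h4.1 f g wm hw η₁
  obtain ⟨a₂, u₂, hu₂, β₂, l₂⟩ := h4.1 g h wm hw η₂
  obtain ⟨d, s, vm, hv, ⟨φ⟩⟩ := h3 u₁ u₂ hu₁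
  obtain ⟨d', t, hW⟩ := h2 vm u₂ hv hu₂
  -- the common refinement
  refine ⟨d', (t ≫ s) ≫ u₁, ?_, ?_, ?_, ?_, ?_, ?_⟩
  · exact h5 _ _ hW ⟨(α_ t s u₁) ≪≫ whiskerLeftIso t φ⟩
  · exact (α_ (t ≫ s) u₁ f).hom ≫ (t ≫ s) ◁ β₁ ≫ (α_ (t ≫ s) u₁ g).inv
  · exact
      let ε₀ : (t ≫ s) ≫ u₁ ≅ (t ≫ vm) ≫ u₂ :=
        (α_ t s u₁) ≪≫ whiskerLeftIso t φ ≪≫ (α_ t vm u₂).symm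
      ε₀.hom ▷ g ≫ ((α_ (t ≫ vm) u₂ g).hom ≫ (t ≫ vm) ◁ β₂ ≫ (α_ (t ≫ vm) u₂ h).inv)
        ≫ ε₀.inv ▷ h
  · exact WClass.isLift_whisker f g wm η₁ u₁ β₁ l₁ (t ≫ s)
  · exact WClass.isLift_transport g h wm η₂ _ _ _ _
      (WClass.isLift_whisker g h wm η₂ u₂ β₂ l₂ (t ≫ vm))
  · exact WClass.isLift_comp f g h wm η₁ η₂ _ _ _
      (WClass.isLift_whisker f g wm η₁ u₁ β₁ l₁ (t ≫ s))
      (WClass.isLift_transport g h wm η₂ _ _ _ _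
        (WClass.isLift_whisker g h wm η₂ u₂ β₂ l₂ (t ≫ vm)))
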